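/- Let P be a left-cancellative monoid, H a Hilbert space, and t : P → B(H) a map with t(e) = 1, t(p)t(q) = t(pq), and t(p)*t(p) = 1 for all p, q ∈ P (an isometric representation of P). Then the map W : ℓ²(P) ⊗ H → H ⊗ ℓ²(P) determined by W(δ_q ⊗ h) = t(q)h ⊗ δ_q is a well-defined isometry satisfying W (V_p ⊗ I_H) = (t(p) ⊗ V_p) W for all p ∈ P, where V_p δ_s = δ_{ps} on ℓ²(P). -/

import Mathlib

noncomputable section

/-- For an isometric representation `t` of a left-cancellative monoid `P` on a Hilbert
space `H`, the map `W : ℓ²(P) ⊗ H → H ⊗ ℓ²(P)` (both modelled as `ℓ²(P, H)`) with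
`W(δ_q ⊗ h) = t(q)h ⊗ δ_q` is a well-defined isometry satisfying
`W (V_p ⊗ I) = (t(p) ⊗ V_p) W` for all `p`. -/
theorem stmt17 {P : Type*} [Monoid P] [IsLeftCancelMul P] [DecidableEq P]
    {H : Type*} [NormedAddCommGroup H] [InnerProductSpace ℂ H] [CompleteSpace H]
    (t : P → (H →L[ℂ] H)) (ht1 : t 1 = 1)
    (htm : ∀ p q : P, (t p).comp (t q) = t (p * q))
    (hti : ∀ p : P, (ContinuousLinearMap.adjoint (t p)).comp (t p) = 1) :
    ∃ W : lp (fun _ : P => H) 2 →ₗᵢ[ℂ] lp (fun _ : P => H) 2,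
      (∀ (q : P) (h : H), W (lp.single 2 q h) = lp.single 2 q (t q h)) ∧
      (∀ (p : P) (Vp Tp : lp (fun _ : P => H) 2 →L[ℂ] lp (fun _ : P => H) 2),
        (∀ (q : P) (h : H), Vp (lp.single 2 q h) = lp.single 2 (p * q) h) →
        (∀ (q : P) (h : H), Tp (lp.single 2 q h) = lp.single 2 (p * q) (t p h)) →
        ∀ x, W (Vp x) = Tp (W x)) := by
  -- t p is norm-preserving
  have hnorm : ∀ (p : P) (x : H), ‖t p x‖ = ‖x‖ := by
    intro p x
    have h1 : ContinuousLinearMap.adjoint (t p) (t p x) = x := by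
      have := congrArg (fun A => A x) (hti p); simpa using this
    have h2 : (inner ℂ (t p x) (t p x) : ℂ) = inner ℂ x x := by
      rw [← ContinuousLinearMap.adjoint_inner_left, h1]
    rw [norm_eq_sqrt_re_inner (𝕜 := ℂ), norm_eq_sqrt_re_inner (𝕜 := ℂ) x, h2]
  -- the map
  have hmem : ∀ x : lp (fun _ : P => H) 2, Memℓp (fun q => t q (x q)) 2 := by
    intro x
    apply memℓp_gen
    have := ((lp.memℓp x).summable (by norm_num : (0:ℝ) < ENNReal.toReal 2))
    convert this using 2 with q
    rw [hnorm]
  set Wfun : lp (fun _ : P => H) 2 → lp (fun _ : P => H) 2 :=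
    fun x => ⟨fun q => t q (x q), hmem x⟩ with hW
  have hWapp : ∀ (x : lp (fun _ : P => H) 2) (q : P), (Wfun x : ∀ q, H) q = t q (x q) :=
    fun _ _ => rfl
  let Wli : lp (fun _ : P => H) 2 →ₗᵢ[ℂ] lp (fun _ : P => H) 2 :=
    { toFun := Wfun
      map_add' := by
        intro x y; ext q
        simp [hWapp, lp.coeFn_add, Pi.add_apply]
      map_smul' := by
        intro c x; ext q
        simp [hWapp, lp.coeFn_smul, Pi.smul_apply]
      norm_map' := by
        intro x
        rw [lp.norm_eq_tsum_rpow (by norm_num : (0:ℝ) < ENNReal.toReal 2), lp.norm_eq_tsum_rpow (by norm_num : (0:ℝ) < ENNReal.toReal 2)]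
        congr 1
        congr 1
        ext q
        show ‖t q ((x : ∀ _, H) q)‖ ^ ENNReal.toReal 2 = ‖(x : ∀ _, H) q‖ ^ ENNReal.toReal 2
        rw [hnorm] }
  have hWsingle : ∀ (q : P) (h : H), Wli (lp.single 2 q h) = lp.single 2 q (t q h) := by
    intro q h
    ext r
    have hWr : (Wli (lp.single 2 q h) : ∀ _, H) r = t r ((lp.single 2 q h : ∀ _, H) r) := rfl
    rw [hWr]
    by_cases hr : r = q
    · subst hr; rw [lp.single_apply_self, lp.single_apply_self]
    · rw [lp.single_apply_ne _ _ _ hr, lp.single_apply_ne _ _ _ hr, map_zero]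
  refine ⟨Wli, hWsingle, ?_⟩
  intro p Vp Tp hVp hTp x
  have hs := lp.hasSum_single (p := 2) (by norm_num : (2 : ENNReal) ≠ ⊤) x
  have h1 : HasSum (fun q => Wli.toContinuousLinearMap (Vp (lp.single 2 q (x q))))
      (Wli.toContinuousLinearMap (Vp x)) :=
    (hs.mapL Vp).mapL Wli.toContinuousLinearMap
  have h2 : HasSum (fun q => Tp (Wli.toContinuousLinearMap (lp.single 2 q (x q))))
      (Tp (Wli.toContinuousLinearMap x)) :=
    (hs.mapL Wli.toContinuousLinearMap).mapL Tp
  have hterm : ∀ q : P, Wli.toContinuousLinearMap (Vp (lp.single 2 q (x q)))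
      = Tp (Wli.toContinuousLinearMap (lp.single 2 q (x q))) := by
    intro q
    have : Wli.toContinuousLinearMap (lp.single 2 q (x q)) = lp.single 2 q (t q (x q)) :=
      hWsingle q (x q)
    rw [this, hTp, hVp]
    show Wli (lp.single 2 (p * q) (x q)) = _
    rw [hWsingle]
    congr 1
    exact congrArg (fun A => A (x q)) (htm p q).symm
  exact (h1.congr_fun fun q => (hterm q).symm).unique h2
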